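/- arXiv:1311.6429 — 4 statements merged into one kernel-verified Lean document; each statement's English description precedes it below -/
import Mathlib

section
/- Let (V₁, ω₁), (V₂, ω₂), (V₃, ω₃) be finite-dimensional symplectic vector spaces over a field k. Let L₁₂ ⊆ V₁ × V₂ be a Lagrangian subspace for the form ω₁ ⊖ ω₂ and L₂₃ ⊆ V₂ × V₃ a Lagrangian subspace for ω₂ ⊖ ω₃. Then the composed relation L₂₃ ∘ L₁₂ := { (x, z) ∈ V₁ × V₃ : ∃ y ∈ V₂, (x, y) ∈ L₁₂ and (y, z) ∈ L₂₃ } is a Lagrangian subspace of (V₁ × V₃, ω₁ ⊖ ω₃). (This is the linear-algebraic content, at the level of tangent complexes, of the paper's Theorem 1.8 that Lagrangian correspondences between shifted symplectic stacks compose: the fiber product L₁ ×_Y L₂ of Lagrangian correspondences X ← L₁ → Y and Y ← L₂ → Z is a Lagrangian correspondence between X and Z.) -/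
open LinearMap (BilinForm)

/-- The difference form `ω_V ⊖ ω_W` on `V × W`, given by
`(ω_V ⊖ ω_W)((x,y),(x',y')) = ω_V(x,x') − ω_W(y,y')`. -/
noncomputable def diffForm {k : Type*} [Field k]
    {V W : Type*} [AddCommGroup V] [Module k V] [AddCommGroup W] [Module k W]
    (ωV : BilinForm k V) (ωW : BilinForm k W) : BilinForm k (V × W) :=
  ωV.compl₁₂ (LinearMap.fst k V W) (LinearMap.fst k V W) -
    ωW.compl₁₂ (LinearMap.snd k V W) (LinearMap.snd k V W)

/-- A subspace is Lagrangian if it equals its own orthogonal complement with respect to the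
symplectic form. -/
def IsLagrangian {k : Type*} [Field k]
    {V : Type*} [AddCommGroup V] [Module k V]
    (ω : BilinForm k V) (L : Submodule k V) : Prop :=
  ω.orthogonal L = L

/-- The composition of linear relations
`L₂₃ ∘ L₁₂ = { (x, z) : ∃ y, (x, y) ∈ L₁₂ ∧ (y, z) ∈ L₂₃ }` as a subspace of `V₁ × V₃`. -/
def relComp {k : Type*} [Field k]
    {V₁ V₂ V₃ : Type*} [AddCommGroup V₁] [Module k V₁] [AddCommGroup V₂] [Module k V₂]
    [AddCommGroup V₃] [Module k V₃]
    (L₁₂ : Submodule k (V₁ × V₂)) (L₂₃ : Submodule k (V₂ × V₃)) :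
    Submodule k (V₁ × V₃) where
  carrier := {p | ∃ y : V₂, (p.1, y) ∈ L₁₂ ∧ (y, p.2) ∈ L₂₃}
  zero_mem' := ⟨0, by exact L₁₂.zero_mem, by exact L₂₃.zero_mem⟩
  add_mem' := by
    rintro p q ⟨y, h1, h2⟩ ⟨y', h1', h2'⟩
    exact ⟨y + y', by simpa [Prod.mk_add_mk] using L₁₂.add_mem h1 h1',
      by simpa [Prod.mk_add_mk] using L₂₃.add_mem h2 h2'⟩
  smul_mem' := by
    rintro c p ⟨y, h1, h2⟩
    exact ⟨c • y, by simpa [Prod.smul_mk] using L₁₂.smul_mem c h1,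
      by simpa [Prod.smul_mk] using L₂₃.smul_mem c h2⟩

section Aux

variable {k : Type*} [Field k]

lemma diffForm_apply {V W : Type*} [AddCommGroup V] [Module k V] [AddCommGroup W] [Module k W]
    (ωV : BilinForm k V) (ωW : BilinForm k W) (p q : V × W) :
    diffForm ωV ωW p q = ωV p.1 q.1 - ωW p.2 q.2 := by
  simp [diffForm]

lemma diffForm_isAlt {V W : Type*} [AddCommGroup V] [Module k V] [AddCommGroup W] [Module k W]
    {ωV : BilinForm k V} {ωW : BilinForm k W} (hV : ωV.IsAlt) (hW : ωW.IsAlt) :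
    (diffForm ωV ωW).IsAlt := by
  intro p
  simp [diffForm_apply, hV p.1, hW p.2]

lemma diffForm_nondeg {V W : Type*} [AddCommGroup V] [Module k V] [AddCommGroup W] [Module k W]
    {ωV : BilinForm k V} {ωW : BilinForm k W} (hV : ωV.Nondegenerate) (hW : ωW.Nondegenerate) :
    (diffForm ωV ωW).Nondegenerate := by
  refine ⟨?_, ?_⟩
  · rintro ⟨x, y⟩ h
    have hx : x = 0 := hV.1 x fun v => by simpa [diffForm_apply] using h (v, 0)
    have hy : y = 0 := hW.1 y fun w => by
      have := h (0, w); simp [diffForm_apply] at this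
      simpa using neg_eq_zero.mp (by simpa using this)
    simp [hx, hy, Prod.ext_iff]
  · rintro ⟨x, y⟩ h
    have hx : x = 0 := hV.2 x fun v => by simpa [diffForm_apply] using h (v, 0)
    have hy : y = 0 := hW.2 y fun w => by
      have := h (0, w); simp [diffForm_apply] at this
      simpa using neg_eq_zero.mp (by simpa using this)
    simp [hx, hy, Prod.ext_iff]

/-- rank formula for comap of a surjective linear map -/
lemma finrank_comap_of_surjective {M N : Type*} [AddCommGroup M] [Module k M]
    [AddCommGroup N] [Module k N] [FiniteDimensional k M]
    (f : M →ₗ[k] N) (hf : Function.Surjective f) (p : Submodule k N) :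
    Module.finrank k (p.comap f) = Module.finrank k p + Module.finrank k (LinearMap.ker f) := by
  set q := p.comap f with hq
  have hrange : LinearMap.range (f ∘ₗ q.subtype) = p := by
    rw [LinearMap.range_comp, Submodule.range_subtype, hq,
      Submodule.map_comap_eq_of_surjective hf]
  have hker : Module.finrank k (LinearMap.ker (f ∘ₗ q.subtype)) =
      Module.finrank k (LinearMap.ker f) := by
    rw [LinearMap.ker_comp]
    have h1 : Module.finrank k ((LinearMap.ker f).comap q.subtype) =
        Module.finrank k (((LinearMap.ker f).comap q.subtype).map q.subtype) :=
      (Submodule.finrank_map_subtype_eq q _).symm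
    have h2 : q ⊓ LinearMap.ker f = LinearMap.ker f := inf_eq_right.mpr (by
      intro x hx
      simp only [hq, Submodule.mem_comap, LinearMap.mem_ker.mp hx, Submodule.zero_mem])
    rw [h1, Submodule.map_comap_subtype, h2]
  have := LinearMap.finrank_range_add_finrank_ker (f ∘ₗ q.subtype)
  rw [hrange, hker] at this
  omega

/-- rank formula for the image of a submodule -/
lemma finrank_map_add {M N : Type*} [AddCommGroup M] [Module k M]
    [AddCommGroup N] [Module k N] [FiniteDimensional k M]
    (f : M →ₗ[k] N) (q : Submodule k M) :
    Module.finrank k (q.map f) + Module.finrank k (q ⊓ LinearMap.ker f : Submodule k M) =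
      Module.finrank k q := by
  have hrange : LinearMap.range (f ∘ₗ q.subtype) = q.map f := by
    rw [LinearMap.range_comp, Submodule.range_subtype]
  have hker : Module.finrank k (LinearMap.ker (f ∘ₗ q.subtype)) =
      Module.finrank k (q ⊓ LinearMap.ker f : Submodule k M) := by
    rw [LinearMap.ker_comp, ← Submodule.finrank_map_subtype_eq q, Submodule.map_comap_subtype]
  have := LinearMap.finrank_range_add_finrank_ker (f ∘ₗ q.subtype)
  rw [hrange, hker] at this
  omega

lemma lagrangian_finrank {V : Type*} [AddCommGroup V] [Module k V] [FiniteDimensional k V]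
    {ω : BilinForm k V} (hnd : ω.Nondegenerate) (hrefl : ω.IsRefl)
    {L : Submodule k V} (hL : IsLagrangian ω L) :
    2 * Module.finrank k L = Module.finrank k V := by
  have h := LinearMap.BilinForm.finrank_orthogonal hnd L
  rw [hL] at h
  have : Module.finrank k L ≤ Module.finrank k V := Submodule.finrank_le L
  omega

end Aux

set_option maxHeartbeats 2000000 in
/-- Given symplectic vector spaces `(V₁,ω₁)`, `(V₂,ω₂)`, `(V₃,ω₃)`, a
Lagrangian subspace `L₁₂ ⊆ V₁ × V₂` for `ω₁ ⊖ ω₂` and a Lagrangian subspace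
`L₂₃ ⊆ V₂ × V₃` for `ω₂ ⊖ ω₃`, the composed relation `L₂₃ ∘ L₁₂` is a Lagrangian subspace
of `(V₁ × V₃, ω₁ ⊖ ω₃)`. -/
theorem stmt_4 {k : Type*} [Field k]
    {V₁ V₂ V₃ : Type*}
    [AddCommGroup V₁] [Module k V₁] [FiniteDimensional k V₁]
    [AddCommGroup V₂] [Module k V₂] [FiniteDimensional k V₂]
    [AddCommGroup V₃] [Module k V₃] [FiniteDimensional k V₃]
    (ω₁ : BilinForm k V₁) (ω₂ : BilinForm k V₂) (ω₃ : BilinForm k V₃)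
    (h₁alt : ω₁.IsAlt) (h₁nd : ω₁.Nondegenerate)
    (h₂alt : ω₂.IsAlt) (h₂nd : ω₂.Nondegenerate)
    (h₃alt : ω₃.IsAlt) (h₃nd : ω₃.Nondegenerate)
    (L₁₂ : Submodule k (V₁ × V₂)) (L₂₃ : Submodule k (V₂ × V₃))
    (hL₁₂ : IsLagrangian (diffForm ω₁ ω₂) L₁₂)
    (hL₂₃ : IsLagrangian (diffForm ω₂ ω₃) L₂₃) :
    IsLagrangian (diffForm ω₁ ω₃) (relComp L₁₂ L₂₃) := by
  classical
  set L := relComp L₁₂ L₂₃ with hLdef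
  set Ω := diffForm ω₁ ω₃ with hΩ
  have hΩalt : Ω.IsAlt := diffForm_isAlt h₁alt h₃alt
  have hΩrefl : Ω.IsRefl := hΩalt.isRefl
  have hΩnd : Ω.Nondegenerate := diffForm_nondeg h₁nd h₃nd
  -- membership characterizations coming from the Lagrangian conditions
  have hmem₁₂ : ∀ p : V₁ × V₂, p ∈ L₁₂ ↔ ∀ q ∈ L₁₂, ω₁ q.1 p.1 - ω₂ q.2 p.2 = 0 := by
    intro p
    conv_lhs => rw [← hL₁₂]
    simp only [LinearMap.BilinForm.mem_orthogonal_iff, LinearMap.BilinForm.isOrtho_def,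
      diffForm_apply]
  have hmem₂₃ : ∀ p : V₂ × V₃, p ∈ L₂₃ ↔ ∀ q ∈ L₂₃, ω₂ q.1 p.1 - ω₃ q.2 p.2 = 0 := by
    intro p
    conv_lhs => rw [← hL₂₃]
    simp only [LinearMap.BilinForm.mem_orthogonal_iff, LinearMap.BilinForm.isOrtho_def,
      diffForm_apply]
  -- Step 1: L is isotropic
  have hiso : L ≤ Ω.orthogonal L := by
    rintro ⟨x, z⟩ ⟨y, hxy, hyz⟩
    rw [LinearMap.BilinForm.mem_orthogonal_iff]
    rintro ⟨x', z'⟩ ⟨y', hx'y', hy'z'⟩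
    have e1 : ω₁ x' x - ω₂ y' y = 0 := (hmem₁₂ (x, y)).mp hxy (x', y') hx'y'
    have e2 : ω₂ y' y - ω₃ z' z = 0 := (hmem₂₃ (y, z)).mp hyz (y', z') hy'z'
    show Ω (x', z') (x, z) = 0
    rw [hΩ, diffForm_apply]
    have : ω₁ (x', z').1 (x, z).1 - ω₃ (x', z').2 (x, z).2 =
        (ω₁ x' x - ω₂ y' y) + (ω₂ y' y - ω₃ z' z) := by ring
    rw [this, e1, e2, add_zero]
  -- Step 2: dimension count.
  -- projections from V₁ × V₂ × V₃
  set π₁₂ : (V₁ × V₂ × V₃) →ₗ[k] V₁ × V₂ :=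
    (LinearMap.fst k V₁ (V₂ × V₃)).prod
      ((LinearMap.fst k V₂ V₃) ∘ₗ LinearMap.snd k V₁ (V₂ × V₃)) with hπ₁₂
  set π₂₃ : (V₁ × V₂ × V₃) →ₗ[k] V₂ × V₃ := LinearMap.snd k V₁ (V₂ × V₃) with hπ₂₃
  set π₂ : (V₁ × V₂ × V₃) →ₗ[k] V₂ :=
    (LinearMap.fst k V₂ V₃) ∘ₗ LinearMap.snd k V₁ (V₂ × V₃) with hπ₂
  set π₁₃ : (V₁ × V₂ × V₃) →ₗ[k] V₁ × V₃ :=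
    (LinearMap.fst k V₁ (V₂ × V₃)).prod
      ((LinearMap.snd k V₂ V₃) ∘ₗ LinearMap.snd k V₁ (V₂ × V₃)) with hπ₁₃
  have hπ₁₂s : Function.Surjective π₁₂ := fun p => ⟨(p.1, p.2, 0), rfl⟩
  have hπ₂₃s : Function.Surjective π₂₃ := fun p => ⟨(0, p), rfl⟩
  have hπ₂s : Function.Surjective π₂ := fun y => ⟨(0, y, 0), rfl⟩
  -- dimensions of ambient things
  set d₁ := Module.finrank k V₁
  set d₂ := Module.finrank k V₂
  set d₃ := Module.finrank k V₃
  have hdtot : Module.finrank k (V₁ × V₂ × V₃) = d₁ + (d₂ + d₃) := by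
    rw [Module.finrank_prod, Module.finrank_prod]
  have hd13 : Module.finrank k (V₁ × V₃) = d₁ + d₃ := Module.finrank_prod
  have hd12 : Module.finrank k (V₁ × V₂) = d₁ + d₂ := Module.finrank_prod
  have hd23 : Module.finrank k (V₂ × V₃) = d₂ + d₃ := Module.finrank_prod
  have hkπ₁₂ : Module.finrank k (LinearMap.ker π₁₂) = d₃ := by
    have h := LinearMap.finrank_range_add_finrank_ker π₁₂
    rw [LinearMap.range_eq_top.mpr hπ₁₂s, finrank_top] at h
    omega
  have hkπ₂₃ : Module.finrank k (LinearMap.ker π₂₃) = d₁ := by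
    have h := LinearMap.finrank_range_add_finrank_ker π₂₃
    rw [LinearMap.range_eq_top.mpr hπ₂₃s, finrank_top] at h
    omega
  have hkπ₂ : Module.finrank k (LinearMap.ker π₂) = d₁ + d₃ := by
    have h := LinearMap.finrank_range_add_finrank_ker π₂
    rw [LinearMap.range_eq_top.mpr hπ₂s, finrank_top] at h
    omega
  set A : Submodule k (V₁ × V₂ × V₃) := L₁₂.comap π₁₂ with hA
  set B : Submodule k (V₁ × V₂ × V₃) := L₂₃.comap π₂₃ with hB
  set M : Submodule k (V₁ × V₂ × V₃) := A ⊓ B with hM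
  -- L is the image of M
  have hLmap : L = M.map π₁₃ := by
    ext ⟨x, z⟩
    constructor
    · rintro ⟨y, h1, h2⟩
      exact ⟨(x, y, z), ⟨h1, h2⟩, rfl⟩
    · rintro ⟨⟨a, b, c⟩, ⟨h1, h2⟩, hp⟩
      have hx : a = x := congrArg Prod.fst hp
      have hz : c = z := congrArg Prod.snd hp
      subst hx; subst hz
      exact ⟨b, h1, h2⟩
  -- the middle subspace S and its orthogonal
  set S : Submodule k V₂ := (L₁₂.map (LinearMap.snd k V₁ V₂)) ⊔
    (L₂₃.map (LinearMap.fst k V₂ V₃)) with hS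
  have horthS : ∀ y : V₂, y ∈ ω₂.orthogonal S ↔ ((0 : V₁), y) ∈ L₁₂ ∧ (y, (0 : V₃)) ∈ L₂₃ := by
    intro y
    rw [LinearMap.BilinForm.mem_orthogonal_iff]
    constructor
    · intro h
      constructor
      · rw [hmem₁₂]
        rintro ⟨a, b⟩ hq
        have hb : b ∈ S := Submodule.mem_sup_left
          (Submodule.mem_map_of_mem (f := LinearMap.snd k V₁ V₂) hq)
        have := h b hb
        simp [this]
      · rw [hmem₂₃]
        rintro ⟨a, b⟩ hq
        have ha : a ∈ S := Submodule.mem_sup_right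
          (Submodule.mem_map_of_mem (f := LinearMap.fst k V₂ V₃) hq)
        have := h a ha
        simp [this]
    · rintro ⟨h1, h2⟩ n hn
      rcases Submodule.mem_sup.mp hn with ⟨a, ha, b, hb, rfl⟩
      rcases ha with ⟨⟨a₁, a₂⟩, ha', rfl⟩
      rcases hb with ⟨⟨b₁, b₂⟩, hb', rfl⟩
      have e1 : ω₁ a₁ (0 : V₁) - ω₂ a₂ y = 0 := (hmem₁₂ (0, y)).mp h1 (a₁, a₂) ha'
      have e2 : ω₂ b₁ y - ω₃ b₂ (0 : V₃) = 0 := (hmem₂₃ (y, 0)).mp h2 (b₁, b₂) hb'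
      simp only [map_zero, zero_sub, neg_eq_zero, LinearMap.zero_apply] at e1
      simp only [map_zero, sub_zero, LinearMap.zero_apply] at e2
      simp only [LinearMap.BilinForm.IsOrtho, LinearMap.snd_apply, LinearMap.fst_apply]
      simp [map_add, LinearMap.add_apply, e1, e2]
  -- A ⊔ B = comap π₂ S
  have hAB : A ⊔ B = S.comap π₂ := by
    apply le_antisymm
    · apply sup_le
      · rintro ⟨x, y, z⟩ hxyz
        exact Submodule.mem_sup_left
          (Submodule.mem_map_of_mem (f := LinearMap.snd k V₁ V₂) hxyz)
      · rintro ⟨x, y, z⟩ hxyz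
        exact Submodule.mem_sup_right
          (Submodule.mem_map_of_mem (f := LinearMap.fst k V₂ V₃) hxyz)
    · rintro ⟨x, y, z⟩ hy
      have hy' : y ∈ S := hy
      rcases Submodule.mem_sup.mp hy' with ⟨a, ha, b, hb, hab⟩
      rcases ha with ⟨⟨x₁, y₁⟩, h1, rfl⟩
      rcases hb with ⟨⟨y₂, z₂⟩, h2, rfl⟩
      simp only [LinearMap.snd_apply, LinearMap.fst_apply] at hab
      have split : (x, y, z) = ((x₁, y₁, 0) : V₁ × V₂ × V₃) + (0, y₂, z₂) +
          (((x - x₁, 0, 0) : V₁ × V₂ × V₃) + (0, 0, z - z₂)) := by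
        simp only [Prod.mk_add_mk, Prod.ext_iff]
        refine ⟨by abel, ?_, by abel⟩
        rw [← hab]; abel
      rw [split]
      have m1 : ((x₁, y₁, 0) : V₁ × V₂ × V₃) ∈ A ⊔ B :=
        Submodule.mem_sup_left (show ((x₁, y₁, 0) : V₁ × V₂ × V₃) ∈ A from h1)
      have m2 : ((0, y₂, z₂) : V₁ × V₂ × V₃) ∈ A ⊔ B :=
        Submodule.mem_sup_right (show ((0, y₂, z₂) : V₁ × V₂ × V₃) ∈ B from h2)
      have m3 : ((x - x₁, 0, 0) : V₁ × V₂ × V₃) ∈ A ⊔ B :=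
        Submodule.mem_sup_right (show ((x - x₁, 0, 0) : V₁ × V₂ × V₃) ∈ B from L₂₃.zero_mem)
      have m4 : ((0, 0, z - z₂) : V₁ × V₂ × V₃) ∈ A ⊔ B :=
        Submodule.mem_sup_left (show ((0, 0, z - z₂) : V₁ × V₂ × V₃) ∈ A from L₁₂.zero_mem)
      exact add_mem (add_mem m1 m2) (add_mem m3 m4)
  -- M ⊓ ker π₁₃ is the image of orthogonal of S under y ↦ (0,y,0)
  set j : V₂ →ₗ[k] V₁ × V₂ × V₃ :=
    (0 : V₂ →ₗ[k] V₁).prod (LinearMap.id.prod (0 : V₂ →ₗ[k] V₃)) with hj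
  have hjinj : Function.Injective j := by
    intro a b h
    simpa [hj, Prod.ext_iff] using h
  have hMker : M ⊓ LinearMap.ker π₁₃ = (ω₂.orthogonal S).map j := by
    ext ⟨x, y, z⟩
    simp only [Submodule.mem_inf, LinearMap.mem_ker, Submodule.mem_map]
    constructor
    · rintro ⟨⟨h1, h2⟩, hk⟩
      have hx : x = 0 := congrArg Prod.fst hk
      have hz : z = 0 := congrArg Prod.snd hk
      subst hx; subst hz
      exact ⟨y, (horthS y).mpr ⟨h1, h2⟩, by simp [hj]⟩
    · rintro ⟨w, hw, hweq⟩
      have hx : (0 : V₁) = x := congrArg Prod.fst hweq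
      have hw2 : w = y := congrArg (fun p => p.2.1) hweq
      have hz : (0 : V₃) = z := congrArg (fun p => p.2.2) hweq
      subst hw2
      rcases (horthS w).mp hw with ⟨h1, h2⟩
      refine ⟨⟨?_, ?_⟩, ?_⟩
      · show ((x, w) : V₁ × V₂) ∈ L₁₂
        rw [← hx]; exact h1
      · show ((w, z) : V₂ × V₃) ∈ L₂₃
        rw [← hz]; exact h2
      · show ((x, z) : V₁ × V₃) = 0
        rw [← hx, ← hz]; rfl
  -- now the dimension bookkeeping
  set s := Module.finrank k S
  have hω₂refl : ω₂.IsRefl := h₂alt.isRefl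
  have horthdim : Module.finrank k (ω₂.orthogonal S) = d₂ - s :=
    LinearMap.BilinForm.finrank_orthogonal h₂nd S
  have hsle : s ≤ d₂ := Submodule.finrank_le S
  have hdimA : Module.finrank k A = Module.finrank k L₁₂ + d₃ := by
    rw [hA, finrank_comap_of_surjective π₁₂ hπ₁₂s, hkπ₁₂]
  have hdimB : Module.finrank k B = Module.finrank k L₂₃ + d₁ := by
    rw [hB, finrank_comap_of_surjective π₂₃ hπ₂₃s, hkπ₂₃]
  have hdimAB : Module.finrank k (A ⊔ B : Submodule k (V₁ × V₂ × V₃)) = s + (d₁ + d₃) := by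
    rw [hAB, finrank_comap_of_surjective π₂ hπ₂s, hkπ₂]
  have hsupinf := Submodule.finrank_sup_add_finrank_inf_eq A B
  have hdimM : Module.finrank k M + s + (d₁ + d₃) =
      Module.finrank k L₁₂ + d₃ + (Module.finrank k L₂₃ + d₁) := by
    rw [hM]; omega
  -- dim of the kernel part
  have hdimKer : Module.finrank k (M ⊓ LinearMap.ker π₁₃ : Submodule k (V₁ × V₂ × V₃)) =
      d₂ - s := by
    rw [hMker, ← horthdim]
    exact (LinearEquiv.finrank_eq
      (Submodule.equivMapOfInjective j hjinj (ω₂.orthogonal S))).symm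
  have hmapM := finrank_map_add π₁₃ M
  -- Lagrangian dimensions
  have h2L₁₂ : 2 * Module.finrank k L₁₂ = d₁ + d₂ := by
    have := lagrangian_finrank (diffForm_nondeg h₁nd h₂nd) (diffForm_isAlt h₁alt h₂alt).isRefl
      hL₁₂
    rwa [Module.finrank_prod] at this
  have h2L₂₃ : 2 * Module.finrank k L₂₃ = d₂ + d₃ := by
    have := lagrangian_finrank (diffForm_nondeg h₂nd h₃nd) (diffForm_isAlt h₂alt h₃alt).isRefl
      hL₂₃
    rwa [Module.finrank_prod] at this
  have hdimL : 2 * Module.finrank k L = d₁ + d₃ := by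
    rw [hLmap]
    omega
  -- conclude
  have horthL : Module.finrank k (Ω.orthogonal L) = Module.finrank k L := by
    rw [LinearMap.BilinForm.finrank_orthogonal hΩnd L, hd13]
    omega
  exact (Submodule.eq_of_le_of_finrank_le hiso horthL.le).symm
end

section
/- Let k be a field of characteristic zero and n ≥ 1. For invertible n×n matrices a, b over k and n×n matrices ξ₁, ξ₂, η₁, η₂, define φ_{a,b}((ξ₁,η₁),(ξ₂,η₂)) := −½·(tr(a⁻¹ξ₁η₂b⁻¹) − tr(a⁻¹ξ₂η₁b⁻¹)). Then for all invertible a, b, c and all matrices ξᵢ, ηᵢ, ζᵢ (i = 1, 2): φ_{a,bc}((ξ₁, η₁c + bζ₁),(ξ₂, η₂c + bζ₂)) + φ_{b,c}((η₁,ζ₁),(η₂,ζ₂)) = φ_{ab,c}((ξ₁b + aη₁, ζ₁),(ξ₂b + aη₂, ζ₂)) + φ_{a,b}((ξ₁,η₁),(ξ₂,η₂)). (This is the associativity (cocycle) condition m₂₃*φ + p₂₃*φ = m₁₂*φ + p₁₂*φ for the two-form φ = −½(p₁*θ, p₂*θ̄) on G × G defining the multiplicative Ω²-torsor on G = GL_n,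 spelled out pointwise using the left Maurer–Cartan form θ_a(ξ) = a⁻¹ξ, the right Maurer–Cartan form θ̄_b(η) = ηb⁻¹, the trace pairing, and the differential of multiplication (ξ, η) ↦ ξb + aη.) -/
open Matrix

/-- The two-form `φ_{a,b}` on `GL_n × GL_n` evaluated on tangent vectors `(ξ₁,η₁)`, `(ξ₂,η₂)`:
`φ_{a,b}((ξ₁,η₁),(ξ₂,η₂)) = −½·(tr(a⁻¹ξ₁η₂b⁻¹) − tr(a⁻¹ξ₂η₁b⁻¹))`. -/
noncomputable def phiForm {k : Type*} [Field k] {n : ℕ}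
    (a b ξ₁ η₁ ξ₂ η₂ : Matrix (Fin n) (Fin n) k) : k :=
  -(1 / 2 : k) * (trace (a⁻¹ * ξ₁ * η₂ * b⁻¹) - trace (a⁻¹ * ξ₂ * η₁ * b⁻¹))

/-- the associativity (cocycle) condition
`m₂₃*φ + p₂₃*φ = m₁₂*φ + p₁₂*φ` for the two-form `φ = −½(p₁*θ, p₂*θ̄)` on `G × G`,
`G = GL_n`, spelled out pointwise. -/
theorem stmt_5 {k : Type*} [Field k] [CharZero k] {n : ℕ} (hn : 1 ≤ n)
    (a b c : Matrix (Fin n) (Fin n) k)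
    (ha : IsUnit a) (hb : IsUnit b) (hc : IsUnit c)
    (ξ₁ ξ₂ η₁ η₂ ζ₁ ζ₂ : Matrix (Fin n) (Fin n) k) :
    phiForm a (b * c) ξ₁ (η₁ * c + b * ζ₁) ξ₂ (η₂ * c + b * ζ₂)
        + phiForm b c η₁ ζ₁ η₂ ζ₂
      = phiForm (a * b) c (ξ₁ * b + a * η₁) ζ₁ (ξ₂ * b + a * η₂) ζ₂
        + phiForm a b ξ₁ η₁ ξ₂ η₂ := by
  rw [Matrix.isUnit_iff_isUnit_det] at ha hb hc
  have h1 : ∀ x y : Matrix (Fin n) (Fin n) k,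
      trace (a⁻¹ * x * (b * y) * (b * c)⁻¹) = trace ((a*b)⁻¹ * (x * b) * y * c⁻¹) := by
    intro x y
    rw [Matrix.mul_inv_rev, Matrix.mul_inv_rev]
    rw [show a⁻¹ * x * (b * y) * (c⁻¹ * b⁻¹) = (a⁻¹ * x * b * (y * c⁻¹)) * b⁻¹ from by
      simp [Matrix.mul_assoc], trace_mul_comm]
    simp [Matrix.mul_assoc]
  have h2 : ∀ x y : Matrix (Fin n) (Fin n) k,
      trace (a⁻¹ * x * (y * c) * (b * c)⁻¹) = trace (a⁻¹ * x * y * b⁻¹) := by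
    intro x y
    rw [Matrix.mul_inv_rev]
    rw [show a⁻¹ * x * (y * c) * (c⁻¹ * b⁻¹) = a⁻¹ * x * y * (c * c⁻¹) * b⁻¹ from by
      simp [Matrix.mul_assoc], Matrix.mul_nonsing_inv _ hc]
    simp [Matrix.mul_assoc]
  have h3 : ∀ x y : Matrix (Fin n) (Fin n) k,
      trace ((a*b)⁻¹ * (a * x) * y * c⁻¹) = trace (b⁻¹ * x * y * c⁻¹) := by
    intro x y
    rw [Matrix.mul_inv_rev]
    rw [show b⁻¹ * a⁻¹ * (a * x) * y * c⁻¹ = b⁻¹ * (a⁻¹ * (a * x)) * y * c⁻¹ from by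
      simp [Matrix.mul_assoc], Matrix.nonsing_inv_mul_cancel_left _ _ ha]
  simp only [phiForm, Matrix.mul_add, Matrix.add_mul, trace_add, h1, h2, h3]
  ring
end

section
/- Let g be a Lie algebra over k, B a symmetric invariant bilinear form on g, and A a Lie algebra automorphism of g that is B-orthogonal. Define the alternating trilinear form C(u,v,w) := B(u, [v,w]). Then for all x₁, x₂, x₃, y₁, y₂, y₃ ∈ g: C(Ax₁ + y₁, Ax₂ + y₂, Ax₃ + y₃) = C(x₁,x₂,x₃) + C(y₁,y₂,y₃) + B([x₁,x₂], A⁻¹y₃) − B([x₁,x₃], A⁻¹y₂) + B([x₂,x₃], A⁻¹y₁) + B(Ax₁, [y₂,y₃]) − B(Ax₂, [y₁,y₃]) + B(Ax₃, [y₁,y₂]). (This expansion is the algebraic content of the paper's Lemma 3.2 that the Cartan three-form ω₁ = (1/12)(θ,[θ,θ]) is a multiplicative section of the multiplicative Ω²-torsor defined by −φ, i.e. m*ω₁ + d_dR φ = p₁*ω₁ + p₂*ω₁, using m*θ = Ad_b p₁*θ + p₂*θ and d_dR φ = ¼(p₁*[θ,θ], p₂*θ̄) + ¼(p₁*θ,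 p₂*[θ̄,θ̄]).) -/
/-- Let `g` be a Lie algebra, `B` a symmetric invariant bilinear form and `A`
a `B`-orthogonal Lie algebra automorphism. With `C(u,v,w) := B(u,[v,w])`, for all
`x₁, x₂, x₃, y₁, y₂, y₃ ∈ g` the stated expansion of `C(Ax₁+y₁, Ax₂+y₂, Ax₃+y₃)` holds. -/
theorem stmt_6 {k : Type*} [Field k] [CharZero k]
    {g : Type*} [LieRing g] [LieAlgebra k g]
    (B : g →ₗ[k] g →ₗ[k] k)
    (hsymm : ∀ x y : g, B x y = B y x)
    (hinv : ∀ x y z : g, B ⁅x, y⁆ z = B x ⁅y, z⁆)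
    (A : g ≃ₗ[k] g)
    (horth : ∀ x y : g, B (A x) (A y) = B x y)
    (hlie : ∀ x y : g, A ⁅x, y⁆ = ⁅A x, A y⁆) :
    ∀ x₁ x₂ x₃ y₁ y₂ y₃ : g,
      B (A x₁ + y₁) ⁅A x₂ + y₂, A x₃ + y₃⁆
        = B x₁ ⁅x₂, x₃⁆ + B y₁ ⁅y₂, y₃⁆
          + B ⁅x₁, x₂⁆ (A.symm y₃) - B ⁅x₁, x₃⁆ (A.symm y₂) + B ⁅x₂, x₃⁆ (A.symm y₁)
          + B (A x₁) ⁅y₂, y₃⁆ - B (A x₂) ⁅y₁, y₃⁆ + B (A x₃) ⁅y₁, y₂⁆ := by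
  intro x₁ x₂ x₃ y₁ y₂ y₃
  have key : ∀ a b c : g, B (A a) ⁅A b, c⁆ = B ⁅a, b⁆ (A.symm c) := by
    intro a b c
    rw [← hinv, ← hlie]
    conv_lhs => rw [← A.apply_symm_apply c]
    rw [horth]
  have key2 : ∀ a c d : g, B c ⁅A a, d⁆ = B (A a) ⁅d, c⁆ := by
    intro a c d; rw [hsymm, hinv]
  have h1 : B (A x₁) ⁅A x₂, A x₃⁆ = B x₁ ⁅x₂, x₃⁆ := by rw [← hlie, horth]
  have h2 : B (A x₁) ⁅A x₂, y₃⁆ = B ⁅x₁, x₂⁆ (A.symm y₃) := key x₁ x₂ y₃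
  have h3 : B (A x₁) ⁅y₂, A x₃⁆ = - B ⁅x₁, x₃⁆ (A.symm y₂) := by
    rw [← lie_skew, map_neg, key]
  have h4 : B y₁ ⁅A x₂, A x₃⁆ = B ⁅x₂, x₃⁆ (A.symm y₁) := by
    rw [← hlie, hsymm]
    conv_lhs => rw [← A.apply_symm_apply y₁]
    rw [horth]
  have h5 : B y₁ ⁅A x₂, y₃⁆ = - B (A x₂) ⁅y₁, y₃⁆ := by
    rw [key2, ← lie_skew, map_neg]
  have h6 : B y₁ ⁅y₂, A x₃⁆ = B (A x₃) ⁅y₁, y₂⁆ := by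
    rw [← lie_skew, map_neg, key2, ← lie_skew, map_neg, neg_neg]
  simp only [lie_add, add_lie, map_add, LinearMap.add_apply]
  linear_combination h1 + h2 + h3 + h4 + h5 + h6
end

section
/- Let B be a symmetric bilinear form on g, A a B-orthogonal linear automorphism of g, and s : g × g → k an alternating bilinear form satisfying s((A⁻¹ − id)v, u) = ½·B((A + id)u, v) for all u, v ∈ g. Then for all v, w ∈ g: s((A⁻¹ − id)w, (A⁻¹ − id)v) = ½·B((A − A⁻¹)w, v). (This is the paper's consequence (3) of the invariance equation for a section s of the multiplicative Ω²-torsor on [G/G]: the condition ι_{(v^R − v^L)}s = ½(θ + θ̄, v) implies ι_{(w^R − w^L)}ι_{(v^R − v^L)}s = ½(Ad_{a⁻¹}(w) − Ad_a(w), v), with A corresponding to the adjoint action of the group element a.) -/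
/-- Let `B` be a symmetric bilinear form on `g`, `A` a `B`-orthogonal linear
automorphism, and `s` an alternating bilinear form with
`s((A⁻¹ − id)v, u) = ½·B((A + id)u, v)` for all `u, v`. Then for all `v, w`:
`s((A⁻¹ − id)w, (A⁻¹ − id)v) = ½·B((A − A⁻¹)w, v)`. -/
theorem stmt_8 {k : Type*} [Field k] [CharZero k]
    {g : Type*} [AddCommGroup g] [Module k g] [FiniteDimensional k g]
    (B : g →ₗ[k] g →ₗ[k] k)
    (hsymm : ∀ x y : g, B x y = B y x)
    (A : g ≃ₗ[k] g)
    (horth : ∀ x y : g, B (A x) (A y) = B x y)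
    (s : g →ₗ[k] g →ₗ[k] k)
    (halt : ∀ x : g, s x x = 0)
    (hs : ∀ u v : g, s (A.symm v - v) u = (1 / 2 : k) * B (A u + u) v) :
    ∀ v w : g,
      s (A.symm w - w) (A.symm v - v) = (1 / 2 : k) * B (A w - A.symm w) v := by
  intro v w
  rw [hs]
  have h1 : A (A.symm v - v) + (A.symm v - v) = A.symm v - A v := by
    rw [map_sub, A.apply_symm_apply]; abel
  rw [h1]
  have h2 : B (A.symm v) w = B (A w) v := by
    rw [← horth (A.symm v) w, A.apply_symm_apply, hsymm]
  have h3 : B (A v) w = B (A.symm w) v := by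
    rw [← A.apply_symm_apply w, horth, hsymm, A.apply_symm_apply]
  rw [map_sub, map_sub, LinearMap.sub_apply, LinearMap.sub_apply, h2, h3]
end
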